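/- Let ρ be a PSD operator on ℂ^{d} ⊗ ℂ^{d} (d = N/2+1) with rank(ρ^{T_S}) = d²−1, invariant under the swap V (Vρ = ρ), and let |Ψ⟩ span ker(ρ^{T_S}). Then V|Ψ*⟩ = |Ψ⟩ (after suitable phase), the matrix M_Ψ of coefficients of |Ψ⟩ in a product basis is Hermitian, and |Ψ⟩ = Σ_l λ_l |ω_l*⟩⊗|ω_l⟩ with real λ_l and orthonormal |ω_l⟩. -/

import Mathlib

open scoped ComplexOrder

/-- Partial transposition over the first tensor factor of `ℂ^d ⊗ ℂ^d`. -/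
def pt1 {d : ℕ} (ρ : Matrix (Fin d × Fin d) (Fin d × Fin d) ℂ) :
    Matrix (Fin d × Fin d) (Fin d × Fin d) ℂ :=
  Matrix.of fun p q => ρ (q.1, p.2) (p.1, q.2)

/-- let `ρ` be PSD on `ℂ^d ⊗ ℂ^d`, invariant under the swap (`Vρ = ρ`),
with `rank ρ^{T_S} = d² - 1` (i.e. `ker ρ^{T_S}` is spanned by a single vector `|Ψ⟩`).
Then, after a suitable phase, `V|Ψ*⟩ = |Ψ⟩` (the coefficient matrix `M_Ψ` is Hermitian)
and `|Ψ⟩ = Σ_l λ_l |ω_l*⟩ ⊗ |ω_l⟩` with real `λ_l` and orthonormal `|ω_l⟩`. -/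
theorem stmt14 (d : ℕ) (ρ : Matrix (Fin d × Fin d) (Fin d × Fin d) ℂ)
    (hPSD : ρ.PosSemidef)
    (hswap : ∀ i j x, ρ (i, j) x = ρ (j, i) x)
    (Ψ : Fin d × Fin d → ℂ) (hΨ : Ψ ≠ 0)
    (hker : (pt1 ρ).mulVec Ψ = 0)
    (hspan : ∀ v, (pt1 ρ).mulVec v = 0 → ∃ c : ℂ, v = c • Ψ) :
    ∃ c : ℂ, c ≠ 0 ∧
      (∀ i j, c * Ψ (j, i) = (starRingEnd ℂ) (c * Ψ (i, j))) ∧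
      ∃ (lam : Fin d → ℝ) (ω : Fin d → (Fin d → ℂ)),
        (∀ l m, (∑ x, (starRingEnd ℂ) (ω l x) * ω m x) = if l = m then 1 else 0) ∧
        ∀ i j, c * Ψ (i, j) = ∑ l, (lam l : ℂ) * (starRingEnd ℂ) (ω l i) * ω l j := by
  have hherm : ∀ x y, ρ x y = (starRingEnd ℂ) (ρ y x) := by
    intro x y
    have := hPSD.1
    rw [Matrix.IsHermitian] at this
    conv_lhs => rw [← this]
    rfl
  -- right-swap symmetry
  have hswap' : ∀ (x : Fin d × Fin d) i j, ρ x (i, j) = ρ x (j, i) := by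
    intro x i j
    rw [hherm x (i, j), hherm x (j, i), hswap]
  -- the conjugate-swapped vector is in the kernel
  set Ψ' : Fin d × Fin d → ℂ := fun p => (starRingEnd ℂ) (Ψ (p.2, p.1)) with hΨ'def
  have hker' : (pt1 ρ).mulVec Ψ' = 0 := by
    funext p
    have h0 : (pt1 ρ).mulVec Ψ (p.2, p.1) = 0 := by rw [hker]; rfl
    have h0c := congrArg (starRingEnd ℂ) h0
    simp only [Matrix.mulVec, dotProduct, pt1, Matrix.of_apply, map_sum, map_mul,
      map_zero, Pi.zero_apply] at h0c ⊢
    rw [← Equiv.sum_comp (Equiv.prodComm (Fin d) (Fin d))]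
    rw [← h0c]
    apply Finset.sum_congr rfl
    intro q _
    have : ρ (q.2, p.2) (p.1, q.1) = (starRingEnd ℂ) (ρ (q.1, p.1) (p.2, q.2)) := by
      rw [hswap q.1 p.1, hswap' _ p.2 q.2, ← hherm]
    simp [Ψ', this]
  obtain ⟨a, ha⟩ := hspan Ψ' hker'
  have haΨ : ∀ i j, (starRingEnd ℂ) (Ψ (j, i)) = a * Ψ (i, j) := by
    intro i j
    have := congrFun ha (i, j)
    simpa [Ψ'] using this
  -- |a| = 1
  obtain ⟨p0, hp0⟩ : ∃ p, Ψ p ≠ 0 := by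
    by_contra h
    push_neg at h
    exact hΨ (funext h)
  have hΨp : Ψ (p0.1, p0.2) ≠ 0 := by simpa using hp0
  have haa : (starRingEnd ℂ) a * a = 1 := by
    have h1 := haΨ p0.1 p0.2
    have h2 := congrArg (starRingEnd ℂ) (haΨ p0.2 p0.1)
    rw [Complex.conj_conj, map_mul, h1] at h2
    have hz : ((starRingEnd ℂ) a * a - 1) * Ψ (p0.1, p0.2) = 0 := by linear_combination -h2
    rcases mul_eq_zero.mp hz with h | h
    · exact sub_eq_zero.mp h
    · exact absurd h hΨp
  have ha0 : a ≠ 0 := by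
    intro h; rw [h] at haa; simp at haa
  -- choose square root c of a
  obtain ⟨c, hc2⟩ : ∃ c : ℂ, c ^ 2 = a := ⟨a ^ ((2:ℕ)⁻¹ : ℂ), by
    simpa using Complex.cpow_nat_inv_pow a (n := 2) (by norm_num)⟩
  have hc0 : c ≠ 0 := by
    intro h; rw [h] at hc2; simp at hc2; exact ha0 hc2.symm
  have hcc : (starRingEnd ℂ) c * c = 1 := by
    have h1 : ((starRingEnd ℂ) c * c) ^ 2 = 1 := by
      have : (starRingEnd ℂ) (c ^ 2) * c ^ 2 = 1 := by rw [hc2]; exact haa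
      rw [map_pow] at this
      linear_combination this
    have hreal : (starRingEnd ℂ) c * c = (Complex.normSq c : ℂ) := by
      rw [mul_comm, Complex.mul_conj]
    rw [hreal] at h1 ⊢
    have h2 : (Complex.normSq c : ℝ) ^ 2 = 1 := by exact_mod_cast h1
    have hnn : (0:ℝ) ≤ Complex.normSq c := Complex.normSq_nonneg c
    have : Complex.normSq c = 1 := by nlinarith
    rw [this]; norm_num
  have hca : (starRingEnd ℂ) c * a = c := by
    rw [← hc2]
    calc (starRingEnd ℂ) c * c ^ 2 = ((starRingEnd ℂ) c * c) * c := by ring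
    _ = c := by rw [hcc, one_mul]
  have hMherm : ∀ i j, c * Ψ (j, i) = (starRingEnd ℂ) (c * Ψ (i, j)) := by
    intro i j
    calc c * Ψ (j, i) = (starRingEnd ℂ) c * (a * Ψ (j, i)) := by rw [← mul_assoc, hca]
      _ = (starRingEnd ℂ) c * (starRingEnd ℂ) (Ψ (i, j)) := by rw [haΨ j i]
      _ = (starRingEnd ℂ) (c * Ψ (i, j)) := (map_mul _ _ _).symm
  refine ⟨c, hc0, hMherm, ?_⟩
  -- spectral decomposition of the Hermitian matrix M i j = c * Ψ (i, j)
  set M : Matrix (Fin d) (Fin d) ℂ := Matrix.of fun i j => c * Ψ (i, j) with hMdef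
  have hM : M.IsHermitian := by
    rw [Matrix.IsHermitian]
    ext i j
    simp only [Matrix.conjTranspose_apply, M, Matrix.of_apply]
    calc star (c * Ψ (j, i)) = star ((starRingEnd ℂ) (c * Ψ (i, j))) := congrArg star (hMherm i j)
      _ = c * Ψ (i, j) := Complex.conj_conj _
  refine ⟨hM.eigenvalues,
    fun l x => (starRingEnd ℂ) ((hM.eigenvectorUnitary : Matrix (Fin d) (Fin d) ℂ) x l), ?_, ?_⟩
  · intro l m
    have hU : (star (hM.eigenvectorUnitary : Matrix (Fin d) (Fin d) ℂ)) *
        (hM.eigenvectorUnitary : Matrix (Fin d) (Fin d) ℂ) = 1 :=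
      Unitary.coe_star_mul_self hM.eigenvectorUnitary
    have key := congrFun (congrFun hU m) l
    simp only [Matrix.mul_apply, Matrix.one_apply, Matrix.star_apply] at key
    simp only [Complex.conj_conj]
    rw [show (if l = m then (1:ℂ) else 0) = (if m = l then 1 else 0) by simp [eq_comm], ← key]
    exact Finset.sum_congr rfl fun x _ => mul_comm _ _
  · intro i j
    have hspec := congrFun (congrFun hM.spectral_theorem i) j
    show M i j = _
    rw [hspec]
    simp only [Unitary.conjStarAlgAut_apply, Matrix.mul_apply, Matrix.diagonal_apply, Matrix.star_apply, Function.comp_apply,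
      mul_ite, mul_zero, Finset.sum_ite_eq', Finset.mem_univ, if_true, Complex.conj_conj,
      RCLike.star_def]
    apply Finset.sum_congr rfl
    intro l _
    exact congrArg (· * (starRingEnd ℂ) ((hM.eigenvectorUnitary : Matrix (Fin d) (Fin d) ℂ) j l))
      (mul_comm ((hM.eigenvectorUnitary : Matrix (Fin d) (Fin d) ℂ) i l) ((hM.eigenvalues l : ℝ) : ℂ))
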